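/- arXiv:1107.1627 — 6 statements merged into one kernel-verified Lean document; each statement's English description precedes it below -/
import Mathlib

section
/- Let r ≥ 2 and k ≥ 1. There exists a finite field F and elements λ_1, …, λ_k ∈ F such that for every t with 1 ≤ t ≤ r, every injective map i : Fin t → Fin r, and every injective map j : Fin t → Fin k, the block matrix G of size (t·r^k) × (t·r^k) over F (rows and columns indexed by Fin t × (ZMod r)^k) whose (u,v) block equals λ_{j(v)}^{i(u)} · Q_{j(v)}^{i(u)} is invertible. (This is the statement that Construction 1, with parity coefficients λ_j, can be made an MDS code over a large enough finite field.) -/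
open Matrix MvPolynomial Equiv Function Finset

private lemma qpow_entry {F : Type} [Field F] {V : Type} [Fintype V] [DecidableEq V]
    [AddCommGroup V] (e : V) (n : ℕ) (x y : V) :
    ((Matrix.of fun x y : V => if x = y + e then (1 : F) else 0) ^ n) x y
      = if x = y + n • e then 1 else 0 := by
  induction n generalizing x y with
  | zero => simp [Matrix.one_apply]
  | succ n ih =>
    rw [pow_succ, Matrix.mul_apply, Finset.sum_eq_single (y + e)]
    · rw [ih]
      have h : y + e + n • e = y + (n + 1) • e := by rw [succ_nsmul]; abel
      rw [h, Matrix.of_apply, if_pos rfl, mul_one]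
    · intro z _ hz
      rw [Matrix.of_apply, if_neg hz, mul_zero]
    · simp

private lemma prod_monomial {ι σ R : Type*} [CommSemiring R] (s : Finset ι)
    (d : ι → (σ →₀ ℕ)) (c : ι → R) :
    (∏ q ∈ s, (monomial (d q) (c q) : MvPolynomial σ R))
      = monomial (∑ q ∈ s, d q) (∏ q ∈ s, c q) := by
  induction s using Finset.cons_induction with
  | empty => simp
  | cons a s ha ih => rw [Finset.prod_cons, Finset.prod_cons, Finset.sum_cons, ih, monomial_mul]

private noncomputable def Nmat (r k t : ℕ) [NeZero r] (F : Type) [Field F]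
    (i : Fin t → Fin r) (j : Fin t → Fin k) :
    Matrix (Fin t × (Fin k → ZMod r)) (Fin t × (Fin k → ZMod r)) (MvPolynomial (Fin k) F) :=
  Matrix.of fun p q =>
    (X (j q.1) : MvPolynomial (Fin k) F) ^ (i p.1 : ℕ) *
      C (((Matrix.of fun x y : Fin k → ZMod r =>
          if x = y + Pi.single (j q.1) 1 then (1 : F) else 0) ^ (i p.1 : ℕ)) p.2 q.2)

private lemma Nmat_apply (r k t : ℕ) [NeZero r] (F : Type) [Field F]
    (i : Fin t → Fin r) (j : Fin t → Fin k) (p q : Fin t × (Fin k → ZMod r)) :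
    Nmat r k t F i j p q
      = monomial (Finsupp.single (j q.1) (i p.1 : ℕ))
          (if p.2 = q.2 + (i p.1 : ℕ) • Pi.single (j q.1) 1 then (1 : F) else 0) := by
  show (X (j q.1) : MvPolynomial (Fin k) F) ^ (i p.1 : ℕ) * C _ = _
  rw [qpow_entry, X_pow_eq_monomial, mul_comm, C_mul_monomial, mul_one]

/-- the exponent vector of the Leibniz term of `σ` -/
private noncomputable def dvec (r k t : ℕ) [NeZero r] (i : Fin t → Fin r) (j : Fin t → Fin k)
    (σ : Equiv.Perm (Fin t × (Fin k → ZMod r))) : Fin k →₀ ℕ :=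
  ∑ q : Fin t × (Fin k → ZMod r), Finsupp.single (j q.1) (i (σ q).1 : ℕ)

private def cterm (r k t : ℕ) [NeZero r] (F : Type) [Field F]
    (i : Fin t → Fin r) (j : Fin t → Fin k)
    (σ : Equiv.Perm (Fin t × (Fin k → ZMod r))) : F :=
  ∏ q : Fin t × (Fin k → ZMod r),
    (if (σ q).2 = q.2 + (i (σ q).1 : ℕ) • Pi.single (j q.1) 1 then (1 : F) else 0)

private lemma det_Nmat (r k t : ℕ) [NeZero r] (F : Type) [Field F]
    (i : Fin t → Fin r) (j : Fin t → Fin k) :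
    (Nmat r k t F i j).det
      = ∑ σ : Equiv.Perm (Fin t × (Fin k → ZMod r)),
          monomial (dvec r k t i j σ)
            (((Equiv.Perm.sign σ : ℤ) : F) * cterm r k t F i j σ) := by
  rw [Matrix.det_apply']
  refine Finset.sum_congr rfl fun σ _ => ?_
  have h1 : (∏ q : Fin t × (Fin k → ZMod r), Nmat r k t F i j (σ q) q)
      = monomial (dvec r k t i j σ) (cterm r k t F i j σ) := by
    unfold dvec cterm
    rw [← prod_monomial]
    exact Finset.prod_congr rfl fun q _ => Nmat_apply r k t F i j (σ q) q
  rw [h1, ← map_intCast (C : F →+* MvPolynomial (Fin k) F), C_mul_monomial]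

private lemma det_Nmat_ne_zero (r k t : ℕ) [NeZero r] (F : Type) [Field F]
    (i : Fin t → Fin r) (hi : Function.Injective i)
    (j : Fin t → Fin k) (hj : Function.Injective j) :
    (Nmat r k t F i j).det ≠ 0 := by
  classical
  -- sort the exponents decreasingly
  set ρ : Equiv.Perm (Fin t) := Fin.revPerm.trans (Tuple.sort i) with hρdef
  set b : Fin t → ℕ := (fun v => (i (ρ v) : ℕ)) with hbdef
  have hb : Antitone b := by
    intro v w hvw
    have h1 : Fin.rev w ≤ Fin.rev v := Fin.rev_le_rev.mpr hvw
    have h2 := Tuple.monotone_sort i h1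
    simpa [hbdef, hρdef] using h2
  have hbv : ∀ u v, (i u : ℕ) = b v → u = ρ v := fun u v h =>
    hi (Fin.val_injective (h : (i u : ℕ) = (i (ρ v) : ℕ)))
  -- the leading permutation
  set π : Equiv.Perm (Fin t × (Fin k → ZMod r)) :=
    { toFun := fun q => (ρ q.1, q.2 + b q.1 • Pi.single (j q.1) 1)
      invFun := fun p => (ρ.symm p.1, p.2 - b (ρ.symm p.1) • Pi.single (j (ρ.symm p.1)) 1)
      left_inv := fun q => by
        obtain ⟨v, y⟩ := q
        simp
      right_inv := fun p => by
        obtain ⟨u, x⟩ := p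
        simp } with hπdef
  have hπ1 : ∀ q : Fin t × (Fin k → ZMod r), (π q).1 = ρ q.1 := fun _ => rfl
  have hπ2 : ∀ q : Fin t × (Fin k → ZMod r),
      (π q).2 = q.2 + b q.1 • Pi.single (j q.1) 1 := fun _ => rfl
  -- the leading monomial
  set mstar : Fin k →₀ ℕ :=
    ∑ v : Fin t, Finsupp.single (j v) (Fintype.card (Fin k → ZMod r) * b v) with hmdef
  have hπd : dvec r k t i j π = mstar := by
    unfold dvec
    rw [Fintype.sum_prod_type]
    rw [hmdef]
    refine Finset.sum_congr rfl fun v _ => ?_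
    have h1 : (∑ y : Fin k → ZMod r, Finsupp.single (j (v, y).1) (i (π (v, y)).1 : ℕ))
        = ∑ _y : Fin k → ZMod r, Finsupp.single (j v) (b v) :=
      Finset.sum_congr rfl fun y _ => rfl
    rw [h1, Finset.sum_const, Finset.card_univ, Finsupp.smul_single, smul_eq_mul]
  -- key uniqueness claim
  have key : ∀ σ : Equiv.Perm (Fin t × (Fin k → ZMod r)),
      (∀ q, (σ q).2 = q.2 + (i (σ q).1 : ℕ) • Pi.single (j q.1) 1) →
      dvec r k t i j σ = mstar → σ = π := by
    intro σ hgood hd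
    have hsum : ∀ v : Fin t, (∑ y : Fin k → ZMod r, (i (σ (v, y)).1 : ℕ))
        = Fintype.card (Fin k → ZMod r) * b v := by
      intro v
      have h1 := congrArg (fun f => f (j v)) hd
      simp only [dvec, hmdef, Finsupp.finset_sum_apply, Finsupp.single_apply, hj.eq_iff] at h1
      rw [Fintype.sum_prod_type] at h1
      have h2 : ∀ u : Fin t,
          (∑ y : Fin k → ZMod r, if u = v then (i (σ (u, y)).1 : ℕ) else 0)
            = if u = v then ∑ y : Fin k → ZMod r, (i (σ (u, y)).1 : ℕ) else 0 := by
        intro u; split_ifs <;> simp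
      rw [Finset.sum_congr rfl fun u _ => h2 u] at h1
      simpa using h1
    have main : ∀ n : ℕ, ∀ v : Fin t, (v : ℕ) < n → ∀ y, σ (v, y) = π (v, y) := by
      intro n
      induction n with
      | zero => exact fun v hv => absurd hv (by omega)
      | succ n IH =>
        intro v hv y
        have hA : ∀ y' : Fin k → ZMod r, v ≤ ρ.symm (σ (v, y')).1 := by
          intro y'
          by_contra hc
          push_neg at hc
          have h3 : π (ρ.symm (σ (v, y')).1,
              (σ (v, y')).2 - b (ρ.symm (σ (v, y')).1) •
                Pi.single (j (ρ.symm (σ (v, y')).1)) 1) = σ (v, y') := by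
            refine Prod.ext ?_ ?_
            · rw [hπ1]; exact Equiv.apply_symm_apply ρ _
            · rw [hπ2]; simp
          have hwn : ((ρ.symm (σ (v, y')).1 : Fin t) : ℕ) < n := by
            have := hc
            simp only [Fin.lt_def] at this
            omega
          have h4 := IH (ρ.symm (σ (v, y')).1) hwn
            ((σ (v, y')).2 - b (ρ.symm (σ (v, y')).1) •
              Pi.single (j (ρ.symm (σ (v, y')).1)) 1)
          have h5 := σ.injective (h4.trans h3)
          have h6 : ρ.symm (σ (v, y')).1 = v := congrArg Prod.fst h5
          exact absurd h6 (ne_of_lt hc)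
        have hle : ∀ y' : Fin k → ZMod r, (i (σ (v, y')).1 : ℕ) ≤ b v := by
          intro y'
          have h5 : (i (σ (v, y')).1 : ℕ) = b (ρ.symm (σ (v, y')).1) := by
            simp [hbdef]
          rw [h5]
          exact hb (hA y')
        have heq : ∀ y' : Fin k → ZMod r, (i (σ (v, y')).1 : ℕ) = b v := by
          by_contra hcc
          push_neg at hcc
          obtain ⟨y₀, hy₀⟩ := hcc
          have h6 : (∑ y' : Fin k → ZMod r, (i (σ (v, y')).1 : ℕ))
              < ∑ _y' : Fin k → ZMod r, b v :=
            Finset.sum_lt_sum (fun y' _ => hle y')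
              ⟨y₀, Finset.mem_univ _, lt_of_le_of_ne (hle y₀) hy₀⟩
          rw [hsum v, Finset.sum_const, smul_eq_mul] at h6
          exact lt_irrefl _ h6
        refine Prod.ext ?_ ?_
        · rw [hπ1]; exact hbv _ v (heq y)
        · rw [hπ2]
          have h8 := hgood (v, y)
          rw [heq y] at h8
          exact h8
    refine Equiv.ext fun q => ?_
    have := main ((q.1 : ℕ) + 1) q.1 (Nat.lt_succ_self _) q.2
    simpa using this
  -- the coefficient of mstar is the sign of π
  intro h0
  have hc : coeff mstar (Nmat r k t F i j).det = ((Equiv.Perm.sign π : ℤ) : F) := by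
    rw [det_Nmat, MvPolynomial.coeff_sum, Finset.sum_eq_single π]
    · rw [coeff_monomial, if_pos hπd]
      have hco : cterm r k t F i j π = 1 := by
        unfold cterm
        refine Finset.prod_eq_one fun q _ => ?_
        rw [if_pos]
        rw [hπ2, hπ1]
      rw [hco, mul_one]
    · intro σ _ hσ
      rw [coeff_monomial]
      split_ifs with hdd
      · rcases eq_or_ne (cterm r k t F i j σ) 0 with h | h
        · rw [h, mul_zero]
        · exfalso
          refine hσ (key σ ?_ hdd)
          intro q
          by_contra hq
          exact h (Finset.prod_eq_zero (Finset.mem_univ q) (if_neg hq))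
      · rfl
    · simp
  rw [h0, MvPolynomial.coeff_zero] at hc
  rcases Int.units_eq_one_or (Equiv.Perm.sign π) with h | h <;> rw [h] at hc <;>
    simp at hc

private lemma degree_dvec (r k t : ℕ) [NeZero r] (i : Fin t → Fin r) (j : Fin t → Fin k)
    (σ : Equiv.Perm (Fin t × (Fin k → ZMod r))) :
    (dvec r k t i j σ).degree = ∑ p : Fin t × (Fin k → ZMod r), (i p.1 : ℕ) := by
  unfold dvec
  rw [Finsupp.degree_eq_weight_one, map_sum]
  have h1 : ∀ q : Fin t × (Fin k → ZMod r),
      Finsupp.weight (fun _ => 1) (Finsupp.single (j q.1) (i (σ q).1 : ℕ)) = (i (σ q).1 : ℕ) := by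
    intro q
    simp [Finsupp.weight_apply, Finsupp.sum_single_index]
  rw [Finset.sum_congr rfl fun q _ => h1 q]
  exact Equiv.sum_comp σ fun p => (i p.1 : ℕ)

private lemma det_Nmat_homog (r k t : ℕ) [NeZero r] (F : Type) [Field F]
    (i : Fin t → Fin r) (j : Fin t → Fin k) :
    ((Nmat r k t F i j).det).IsHomogeneous
      (∑ p : Fin t × (Fin k → ZMod r), (i p.1 : ℕ)) := by
  rw [det_Nmat]
  refine MvPolynomial.IsHomogeneous.sum _ _ _ fun σ _ => ?_
  exact isHomogeneous_monomial _ (degree_dvec r k t i j σ)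


/-- Construction 1 can be made MDS over a large enough finite field:
there exist a finite field `F` and coefficients `lam j` such that every `t × t`
sub-block matrix `G` (with `(u,v)` block `lam (j v) ^ (i u) • Q (j v) ^ (i u)`,
where `Q j` is the permutation matrix of `x ↦ x + e j` on `(ZMod r)^k`) is invertible. -/
theorem construction1_MDS_over_large_field (r k : ℕ) (hr : 2 ≤ r) (hk : 1 ≤ k) :
    haveI : NeZero r := ⟨by omega⟩
    ∃ (F : Type) (fieldF : Field F) (fintypeF : Fintype F),
      letI := fieldF
      letI := fintypeF
      ∃ lam : Fin k → F,
        ∀ (t : ℕ), 1 ≤ t → t ≤ r →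
          ∀ (i : Fin t → Fin r), Function.Injective i →
          ∀ (j : Fin t → Fin k), Function.Injective j →
            IsUnit (Matrix.det (Matrix.of
              fun (p q : Fin t × (Fin k → ZMod r)) =>
                lam (j q.1) ^ (i p.1 : ℕ) *
                  ((Matrix.of fun (x y : Fin k → ZMod r) =>
                      if x = y + Pi.single (j q.1) 1 then (1 : F) else 0) ^
                    (i p.1 : ℕ)) p.2 q.2)) := by
  haveI : NeZero r := ⟨by omega⟩
  -- the total degree of the product of all the sub-block determinants
  obtain ⟨nTot, hnTot⟩ : ∃ n : ℕ,
      n = ∑ t ∈ Finset.range (r + 1), ∑ i : Fin t → Fin r, ∑ j : Fin t → Fin k,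
        (if Function.Injective i ∧ Function.Injective j
          then ∑ p : Fin t × (Fin k → ZMod r), (i p.1 : ℕ) else 0) := ⟨_, rfl⟩
  obtain ⟨p, hple, hp⟩ := Nat.exists_infinite_primes (nTot + 1)
  haveI : Fact p.Prime := ⟨hp⟩
  obtain ⟨P, hP⟩ : ∃ P : MvPolynomial (Fin k) (ZMod p),
      P = ∏ t ∈ Finset.range (r + 1), ∏ i : Fin t → Fin r, ∏ j : Fin t → Fin k,
        (if Function.Injective i ∧ Function.Injective j
          then (Nmat r k t (ZMod p) i j).det else 1) := ⟨_, rfl⟩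
  have hhom : P.IsHomogeneous nTot := by
    rw [hP, hnTot]
    refine MvPolynomial.IsHomogeneous.prod _ _ _ fun t _ => ?_
    refine MvPolynomial.IsHomogeneous.prod _ _ _ fun i _ => ?_
    refine MvPolynomial.IsHomogeneous.prod _ _ _ fun j _ => ?_
    split_ifs with h
    · exact det_Nmat_homog r k t (ZMod p) i j
    · exact MvPolynomial.isHomogeneous_one _ _
  have hP0 : P ≠ 0 := by
    rw [hP, Finset.prod_ne_zero_iff]
    intro t _
    rw [Finset.prod_ne_zero_iff]
    intro i _
    rw [Finset.prod_ne_zero_iff]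
    intro j _
    split_ifs with h
    · exact det_Nmat_ne_zero r k t (ZMod p) i h.1 j h.2
    · exact one_ne_zero
  have hcard : (nTot : Cardinal) ≤ Cardinal.mk (ZMod p) := by
    rw [Cardinal.mk_fintype, ZMod.card]
    have h : nTot ≤ p := Nat.le_of_succ_le hple
    exact_mod_cast h
  have hlam : ∃ lam : Fin k → ZMod p, MvPolynomial.eval lam P ≠ 0 := by
    by_contra hno
    push_neg at hno
    exact hP0 (hhom.eq_zero_of_forall_eval_eq_zero_of_le_card hno hcard)
  obtain ⟨lam, hlam⟩ := hlam
  refine ⟨ZMod p, inferInstance, inferInstance, lam, ?_⟩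
  intro t ht1 ht2 i hi j hj
  have hfac : MvPolynomial.eval lam ((Nmat r k t (ZMod p) i j).det) ≠ 0 := by
    intro h0
    apply hlam
    rw [hP, map_prod]
    refine Finset.prod_eq_zero (Finset.mem_range.mpr (Nat.lt_succ_of_le ht2)) ?_
    rw [map_prod]
    refine Finset.prod_eq_zero (Finset.mem_univ i) ?_
    rw [map_prod]
    refine Finset.prod_eq_zero (Finset.mem_univ j) ?_
    rw [if_pos ⟨hi, hj⟩]
    exact h0
  rw [isUnit_iff_ne_zero]
  have hmap : (Matrix.of fun (p' q : Fin t × (Fin k → ZMod r)) =>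
      lam (j q.1) ^ (i p'.1 : ℕ) *
        ((Matrix.of fun (x y : Fin k → ZMod r) =>
            if x = y + Pi.single (j q.1) 1 then (1 : ZMod p) else 0) ^
          (i p'.1 : ℕ)) p'.2 q.2)
      = (Nmat r k t (ZMod p) i j).map (MvPolynomial.eval lam) := by
    ext p' q
    simp [Nmat, Matrix.map_apply]
  rw [hmap, ← RingHom.mapMatrix_apply, ← RingHom.map_det]
  exact hfac
end

section
/- Let r ≥ 2, k ≥ 1, and work in the polynomial ring R = MvPolynomial (Fin k) ℚ with variables X_1, …, X_k. For every t with 1 ≤ t ≤ r, every injective map i : Fin t → Fin r, and every injective map j : Fin t → Fin k, the determinant of the block matrix G over R (rows and columns indexed by Fin t × (ZMod r)^k) whose (u,v) block equals X_{j(v)}^{i(u)} · Q_{j(v)}^{i(u)} (with Q mapped entrywise into R) is a nonzero polynomial. -/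
open MvPolynomial

private lemma shift_matrix_pow {G : Type*} [AddCommGroup G] [Fintype G] [DecidableEq G]
    {R : Type*} [CommRing R] (e : G) (m : ℕ) :
    ((Matrix.of fun x y : G => if x = y + e then (1 : R) else 0) ^ m) =
      Matrix.of fun x y : G => if x = y + m • e then (1 : R) else 0 := by
  induction m with
  | zero => ext x y; simp [Matrix.one_apply]
  | succ m ih =>
      rw [pow_succ, ih]
      ext x y
      rw [Matrix.mul_apply]
      have h1 : ∀ z : G,
          (Matrix.of fun x y : G => if x = y + m • e then (1 : R) else 0) x z *
            (Matrix.of fun x y : G => if x = y + e then (1 : R) else 0) z y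
            = if z = y + e then (if x = z + m • e then (1 : R) else 0) else 0 := by
        intro z
        simp only [Matrix.of_apply]
        split_ifs <;> simp_all
      rw [Finset.sum_congr rfl fun z _ => h1 z, Finset.sum_ite_eq' Finset.univ (y + e)]
      have h2 : y + e + m • e = y + (m + 1) • e := by
        rw [succ_nsmul]; abel
      simp [Matrix.of_apply, h2]

private lemma prod_monomial_one {σ' R' ι' : Type*} [CommSemiring R']
    (s : Finset ι') (f : ι' → (σ' →₀ ℕ)) :
    (∏ z ∈ s, (MvPolynomial.monomial (f z) (1 : R'))) =
      MvPolynomial.monomial (∑ z ∈ s, f z) 1 := by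
  induction s using Finset.cons_induction with
  | empty => simp
  | cons a s ha ih =>
      rw [Finset.prod_cons, Finset.sum_cons, ih, MvPolynomial.monomial_mul, one_mul]

/-- Over `R = MvPolynomial (Fin k) ℚ`, the determinant of the block
matrix `G` whose `(u,v)` block is `X (j v) ^ (i u) • Q (j v) ^ (i u)` (where `Q j`
is the permutation matrix of `x ↦ x + e j` on `(ZMod r)^k`) is a nonzero polynomial,
for every `1 ≤ t ≤ r` and injective `i : Fin t → Fin r`, `j : Fin t → Fin k`. -/
theorem construction1_det_nonzero_polynomial (r k : ℕ) (hr : 2 ≤ r) (hk : 1 ≤ k)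
    (t : ℕ) (ht1 : 1 ≤ t) (ht2 : t ≤ r)
    (i : Fin t → Fin r) (hi : Function.Injective i)
    (j : Fin t → Fin k) (hj : Function.Injective j) :
    haveI : NeZero r := ⟨by omega⟩
    Matrix.det (Matrix.of
      fun (p q : Fin t × (Fin k → ZMod r)) =>
        (X (j q.1) : MvPolynomial (Fin k) ℚ) ^ (i p.1 : ℕ) *
          ((Matrix.of fun (x y : Fin k → ZMod r) =>
              if x = y + Pi.single (j q.1) 1 then (1 : MvPolynomial (Fin k) ℚ) else 0) ^
            (i p.1 : ℕ)) p.2 q.2) ≠ 0 := by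
  haveI : NeZero r := ⟨by omega⟩
  classical
  set R := MvPolynomial (Fin k) ℚ
  let Gr := Fin k → ZMod r
  let ι := Fin t × Gr
  set M : Matrix ι ι R := Matrix.of
      fun (p q : ι) =>
        (X (j q.1) : R) ^ (i p.1 : ℕ) *
          ((Matrix.of fun (x y : Gr) =>
              if x = y + Pi.single (j q.1) 1 then (1 : R) else 0) ^
            (i p.1 : ℕ)) p.2 q.2 with hM
  -- entry formula
  have hentry : ∀ p q : ι, M p q =
      (X (j q.1) : R) ^ (i p.1 : ℕ) *
        (if p.2 = q.2 + (i p.1 : ℕ) • Pi.single (j q.1) 1 then (1 : R) else 0) := by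
    intro p q
    rw [hM, Matrix.of_apply, shift_matrix_pow]
    rfl
  -- target exponent
  let d₀ : Fin k →₀ ℕ := ∑ z : ι, Finsupp.single (j z.1) (i z.1 : ℕ)
  -- the special permutation
  let π₀ : Equiv.Perm ι :=
    Equiv.prodShear (Equiv.refl (Fin t))
      (fun v => Equiv.addRight ((i v : ℕ) • Pi.single (j v) 1 : Gr))
  have hπ₀ : ∀ z : ι, π₀ z = (z.1, z.2 + (i z.1 : ℕ) • Pi.single (j z.1) 1) := by
    intro z; rfl
  -- product formula
  have hprod : ∀ σ : Equiv.Perm ι, (∏ z : ι, M (σ z) z) =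
      (if ∀ z : ι, (σ z).2 = z.2 + (i (σ z).1 : ℕ) • Pi.single (j z.1) 1 then (1 : R) else 0) *
        monomial (∑ z : ι, Finsupp.single (j z.1) (i (σ z).1 : ℕ)) 1 := by
    intro σ
    calc (∏ z : ι, M (σ z) z)
        = ∏ z : ι, ((if (σ z).2 = z.2 + (i (σ z).1 : ℕ) • Pi.single (j z.1) 1
              then (1 : R) else 0) *
            monomial (Finsupp.single (j z.1) (i (σ z).1 : ℕ)) 1) := by
          refine Finset.prod_congr rfl fun z _ => ?_
          rw [hentry, ← X_pow_eq_monomial, mul_comm]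
      _ = _ := by
          rw [Finset.prod_mul_distrib, prod_monomial_one, Fintype.prod_boole]
  -- weights
  let w : Fin k → ℕ := fun a => ∑ v : Fin t, if j v = a then (i v : ℕ) else 0
  have hw : ∀ v : Fin t, w (j v) = (i v : ℕ) := by
    intro v
    have : ∀ v' : Fin t, (if j v' = j v then (i v' : ℕ) else 0)
        = if v' = v then (i v' : ℕ) else 0 := by
      intro v'; simp [hj.eq_iff]
    simp only [w, this]
    rw [Finset.sum_ite_eq' Finset.univ v]
    simp
  -- linear functional on exponents of sums of singles
  have hL : ∀ f : ι → Fin t,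
      (∑ a : Fin k, w a * (∑ z : ι, Finsupp.single (j z.1) (i (f z) : ℕ)) a)
        = ∑ z : ι, (i z.1 : ℕ) * (i (f z) : ℕ) := by
    intro f
    have : ∀ a : Fin k, (∑ z : ι, Finsupp.single (j z.1) (i (f z) : ℕ)) a
        = ∑ z : ι, (Finsupp.single (j z.1) (i (f z) : ℕ)) a := by
      intro a
      rw [Finsupp.finset_sum_apply]
    simp only [this, Finset.mul_sum]
    rw [Finset.sum_comm]
    refine Finset.sum_congr rfl fun z _ => ?_
    simp only [Finsupp.single_apply, mul_ite, mul_zero]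
    rw [Finset.sum_ite_eq Finset.univ (j z.1)]
    simp [hw]
  -- key uniqueness lemma
  have key : ∀ σ : Equiv.Perm ι,
      (∀ z : ι, (σ z).2 = z.2 + (i (σ z).1 : ℕ) • Pi.single (j z.1) 1) →
      (∑ z : ι, Finsupp.single (j z.1) (i (σ z).1 : ℕ)) = d₀ → σ = π₀ := by
    intro σ hP hm
    have hsum : ∑ z : ι, (i z.1 : ℕ) * (i (σ z).1 : ℕ) = ∑ z : ι, (i z.1 : ℕ) * (i z.1 : ℕ) := by
      have h1 := hL (fun z => (σ z).1)
      have h2 := hL (fun z => z.1)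
      rw [hm] at h1
      rw [← h1, ← h2]
    have hz : ∑ z : ι, (((i z.1 : ℕ) : ℤ) - ((i (σ z).1 : ℕ) : ℤ)) ^ 2 = 0 := by
      have e1 : ∑ z : ι, (((i (σ z).1 : ℕ) : ℤ)) ^ 2 = ∑ z : ι, (((i z.1 : ℕ) : ℤ)) ^ 2 :=
        Equiv.sum_comp σ (fun z => (((i z.1 : ℕ) : ℤ)) ^ 2)
      have e2 : ∑ z : ι, ((i z.1 : ℕ) : ℤ) * ((i (σ z).1 : ℕ) : ℤ)
          = ∑ z : ι, ((i z.1 : ℕ) : ℤ) * ((i z.1 : ℕ) : ℤ) := by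
        exact_mod_cast congrArg (Nat.cast : ℕ → ℤ) hsum
      have expand : ∀ z : ι, (((i z.1 : ℕ) : ℤ) - ((i (σ z).1 : ℕ) : ℤ)) ^ 2
          = ((i z.1 : ℕ) : ℤ) ^ 2 + ((i (σ z).1 : ℕ) : ℤ) ^ 2
            - 2 * (((i z.1 : ℕ) : ℤ) * ((i (σ z).1 : ℕ) : ℤ)) := by
        intro z; ring
      rw [Finset.sum_congr rfl fun z _ => expand z, Finset.sum_sub_distrib,
        Finset.sum_add_distrib, ← Finset.mul_sum, e1, e2]
      have : ∀ z : ι, ((i z.1 : ℕ) : ℤ) * ((i z.1 : ℕ) : ℤ) = ((i z.1 : ℕ) : ℤ) ^ 2 := by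
        intro z; ring
      rw [Finset.sum_congr rfl fun z _ => this z]
      ring
    have hfst : ∀ z : ι, (σ z).1 = z.1 := by
      intro z
      have := (Finset.sum_eq_zero_iff_of_nonneg
        (fun z _ => sq_nonneg _)).mp hz z (Finset.mem_univ z)
      have h3 : ((i z.1 : ℕ) : ℤ) = ((i (σ z).1 : ℕ) : ℤ) := by
        have := sq_eq_zero_iff.mp this
        linarith
      have h4 : (i z.1 : ℕ) = (i (σ z).1 : ℕ) := by exact_mod_cast h3
      exact (hi (Fin.val_injective h4)).symm
    refine Equiv.ext fun z => ?_
    have h5 := hP z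
    rw [hfst z] at h5
    rw [hπ₀ z]
    exact Prod.ext (hfst z) h5
  -- π₀ satisfies the conditions
  have hPπ₀ : ∀ z : ι, (π₀ z).2 = z.2 + (i (π₀ z).1 : ℕ) • Pi.single (j z.1) 1 := by
    intro z; rw [hπ₀ z]
  have hmπ₀ : (∑ z : ι, Finsupp.single (j z.1) (i (π₀ z).1 : ℕ)) = d₀ := by
    refine Finset.sum_congr rfl fun z _ => ?_
    rw [hπ₀ z]
  -- compute the coefficient
  intro hdet
  have hc : coeff d₀ (Matrix.det M) = ((Equiv.Perm.sign π₀ : ℤ) : ℚ) := by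
    rw [Matrix.det_apply', coeff_sum]
    have hterm : ∀ σ : Equiv.Perm ι,
        coeff d₀ (((Equiv.Perm.sign σ : ℤ) : R) * ∏ z : ι, M (σ z) z)
          = ((Equiv.Perm.sign σ : ℤ) : ℚ) *
              ((if ∀ z : ι, (σ z).2 = z.2 + (i (σ z).1 : ℕ) • Pi.single (j z.1) 1
                  then (1 : ℚ) else 0) *
               (if (∑ z : ι, Finsupp.single (j z.1) (i (σ z).1 : ℕ)) = d₀
                  then (1 : ℚ) else 0)) := by
      intro σ
      rw [hprod σ]
      have : ((Equiv.Perm.sign σ : ℤ) : R) = C ((Equiv.Perm.sign σ : ℤ) : ℚ) := by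
        push_cast; rfl
      rw [this, coeff_C_mul, ite_mul, one_mul, zero_mul, apply_ite (coeff d₀),
        coeff_monomial, coeff_zero]
      by_cases hP : ∀ z : ι, (σ z).2 = z.2 + (i (σ z).1 : ℕ) • Pi.single (j z.1) 1
      · by_cases hm : (∑ z : ι, Finsupp.single (j z.1) (i (σ z).1 : ℕ)) = d₀
        · simp only [if_pos hP, if_pos hm]; ring
        · simp only [if_pos hP, if_neg hm]; ring
      · simp only [if_neg hP]; ring
    rw [Finset.sum_congr rfl fun σ _ => hterm σ]
    rw [Finset.sum_eq_single π₀]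
    · simp only [if_pos hPπ₀, if_pos hmπ₀]; ring
    · intro σ _ hσ
      by_cases hP : ∀ z : ι, (σ z).2 = z.2 + (i (σ z).1 : ℕ) • Pi.single (j z.1) 1
      · by_cases hm : (∑ z : ι, Finsupp.single (j z.1) (i (σ z).1 : ℕ)) = d₀
        · exact absurd (key σ hP hm) hσ
        · simp only [if_neg hm]; ring
      · simp only [if_neg hP]; ring
    · intro h; exact absurd (Finset.mem_univ π₀) h
  rw [hdet, coeff_zero] at hc
  have : ((Equiv.Perm.sign π₀ : ℤ) : ℚ) ≠ 0 := by
    rcases Int.units_eq_one_or (Equiv.Perm.sign π₀) with h | h <;> rw [h] <;> norm_num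
  exact this hc.symm
end

section
/- Let F be a field, r ≥ 1, n ≥ 1, and let S be the r × r cyclic shift permutation matrix over F defined by S_{a,b} = 1 if a = b + 1 (mod r) and 0 otherwise. Let t ≤ r, let i : Fin t → Fin r be injective, and let q_1, …, q_t be arbitrary n × n matrices over F. Then the block matrix G (indexed by Fin t × (Fin r × Fin n)) whose (u,v) block is the Kronecker product S^{i(u)} ⊗ q_v^{i(u)} is invertible if and only if the block matrix H (indexed by Fin t × Fin n) whose (u,v) block is q_v^{i(u)} is invertible. (This is the structural content of Lemma 1: a code of Construction 1 built from big blocks P_j = S ⊗ p_j is MDS if and only if every t × t sub block matrix of H' = [p_j^i] is invertible.) -/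
open Fin.NatCast

lemma shift_pow_apply (F : Type*) [Field F] (r : ℕ) [NeZero r] (m : ℕ) (a b : Fin r) :
    ((Matrix.of fun a b : Fin r => if a = b + 1 then (1:F) else 0) ^ m) a b
      = if a = b + (m : Fin r) then 1 else 0 := by
  induction m generalizing a b with
  | zero => simp [Matrix.one_apply]
  | succ m ih =>
    rw [pow_succ, Matrix.mul_apply]
    simp only [ih, Matrix.of_apply, ite_mul, one_mul, zero_mul, mul_ite, mul_one, mul_zero]
    rw [Finset.sum_ite_eq' (Finset.univ) (b + 1)]
    simp only [Finset.mem_univ, if_true]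
    congr 1
    push_cast
    rw [add_assoc, add_comm (1 : Fin r)]

/-- structural content of Lemma 1. With `S` the `r × r` cyclic
shift matrix, the block matrix `G` whose `(u,v)` block is the Kronecker product
`S ^ (i u) ⊗ (q v) ^ (i u)` is invertible if and only if the block matrix `H`
whose `(u,v)` block is `(q v) ^ (i u)` is invertible. -/
theorem kronecker_shift_block_invertible_iff (F : Type*) [Field F]
    (r n : ℕ) (hr : 1 ≤ r) (hn : 1 ≤ n)
    (t : ℕ) (ht : t ≤ r) (i : Fin t → Fin r) (hi : Function.Injective i)
    (q : Fin t → Matrix (Fin n) (Fin n) F) :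
    haveI : NeZero r := ⟨by omega⟩
    let S : Matrix (Fin r) (Fin r) F :=
      Matrix.of fun a b => if a = b + 1 then 1 else 0
    (IsUnit (Matrix.det (Matrix.of
        fun (p p' : Fin t × (Fin r × Fin n)) =>
          (S ^ (i p.1 : ℕ)) p.2.1 p'.2.1 * ((q p'.1) ^ (i p.1 : ℕ)) p.2.2 p'.2.2)) ↔
      IsUnit (Matrix.det (Matrix.of
        fun (p p' : Fin t × Fin n) =>
          ((q p'.1) ^ (i p.1 : ℕ)) p.2 p'.2))) := by
  haveI : NeZero r := ⟨by omega⟩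
  intro S
  set G : Matrix (Fin t × (Fin r × Fin n)) (Fin t × (Fin r × Fin n)) F :=
    Matrix.of fun p p' =>
      (S ^ (i p.1 : ℕ)) p.2.1 p'.2.1 * ((q p'.1) ^ (i p.1 : ℕ)) p.2.2 p'.2.2 with hG
  set H : Matrix (Fin t × Fin n) (Fin t × Fin n) F :=
    Matrix.of fun p p' => ((q p'.1) ^ (i p.1 : ℕ)) p.2 p'.2 with hH
  -- row permutation
  let e : Equiv.Perm (Fin t × (Fin r × Fin n)) :=
    { toFun := fun p => (p.1, (p.2.1 + i p.1, p.2.2))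
      invFun := fun p => (p.1, (p.2.1 - i p.1, p.2.2))
      left_inv := fun p => by simp
      right_inv := fun p => by simp }
  let f : (Fin t × (Fin r × Fin n)) ≃ ((Fin t × Fin n) × Fin r) :=
    ⟨fun p => ((p.1, p.2.2), p.2.1), fun p => (p.1.1, (p.2, p.1.2)),
      fun p => rfl, fun p => rfl⟩
  -- the permuted matrix
  have key : (fun p => G (e p)) =
      (Matrix.blockDiagonal (fun _ : Fin r => H)).submatrix
        f f := by
    funext p p'
    obtain ⟨u, a, x⟩ := p
    obtain ⟨v, b, y⟩ := p'
    show G (u, (a + i u, x)) (v, (b, y)) = _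
    simp only [hG, Matrix.of_apply, Matrix.submatrix_apply, Matrix.blockDiagonal_apply, hH]
    rw [shift_pow_apply]
    rw [Fin.cast_val_eq_self]
    by_cases hab : a = b
    · simp [hab, f]
    · have : ¬ (a + i u = b + i u) := fun h => hab (by simpa using add_right_cancel h)
      simp [hab, this, f]
  have hdet : Matrix.det (fun p => G (e p)) = (Equiv.Perm.sign e : ℤ) * G.det :=
    Matrix.det_permute e G
  have hdet2 : Matrix.det (fun p => G (e p)) = H.det ^ r := by
    rw [key]
    rw [Matrix.det_submatrix_equiv_self f, Matrix.det_blockDiagonal]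
    simp
  have hsign : IsUnit ((Equiv.Perm.sign e : ℤ) : F) := by
    rcases Int.units_eq_one_or (Equiv.Perm.sign e) with h | h <;> simp [h]
  constructor
  · intro hG'
    have : IsUnit (H.det ^ r) := by
      rw [← hdet2, hdet]
      exact hsign.mul hG'
    exact (isUnit_pow_iff (by omega : r ≠ 0)).mp this
  · intro hH'
    have h1 : IsUnit (((Equiv.Perm.sign e : ℤ) : F) * G.det) := by
      rw [← hdet, hdet2]; exact hH'.pow r
    exact (IsUnit.mul_iff.mp h1).2
end

section
/- Let F be a field, α ∈ F with α ≠ 0 and α ≠ 1, r ≥ 2, m ≥ 1, n ≥ 1, and let p_1, …, p_m be n × n matrices over F. Suppose that for every t with 1 ≤ t ≤ r, every injective i : Fin t → Fin r, and every injective j : Fin t → Fin m, the block matrix (indexed by Fin t × Fin n) whose (u,v) block is p_{j(v)}^{i(u)} is invertible. Then for every t with 1 ≤ t ≤ r, every injective i : Fin t → Fin r, and every injective j : Fin t → Fin m, the block matrix (indexed by Fin t × (Fin r × Fin n)) whose (u,v) block is A_{j(v)}^{i(u)} is invertible. (That is, if Construction 1 with permutation blocks p_j is MDS, then Construction 2 with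 parity matrices A_j^i is also MDS.) -/
private lemma aux_mod' (r a b : ℕ) (ha : a < r) (hb : b < r) :
    (b ≤ a ∧ (a + r - b) % r = a - b) ∨ (a < b ∧ (a + r - b) % r = a + r - b) := by
  rcases le_or_gt b a with h | h
  · left
    refine ⟨h, ?_⟩
    have h1 : a + r - b = (a - b) + r := by omega
    rw [h1, Nat.add_mod_right, Nat.mod_eq_of_lt (by omega)]
  · right
    exact ⟨h, Nat.mod_eq_of_lt (by omega)⟩

private lemma mod_facts (r a b : ℕ) (ha : a < r) (hb : b < r) (hab : a ≠ b) :
    0 < (a + r - b) % r ∧ (a + r - b) % r < r ∧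
    (a + r - b) % r + (b + r - a) % r = r := by
  rcases aux_mod' r a b ha hb with ⟨h1, e1⟩ | ⟨h1, e1⟩ <;>
    rcases aux_mod' r b a hb ha with ⟨h2, e2⟩ | ⟨h2, e2⟩ <;>
      rw [e1, e2] <;> omega

private lemma beta_mul {F : Type*} [Field F] (α : F) (r a b : ℕ) (ha : a < r) (hb : b < r)
    (hab : a ≠ b) :
    (if 2 * ((a + r - b) % r) < r ∨ (2 * ((a + r - b) % r) = r ∧ 2 * b < r) then α else 1) *
    (if 2 * ((b + r - a) % r) < r ∨ (2 * ((b + r - a) % r) = r ∧ 2 * a < r) then α else 1) = α := by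
  rcases aux_mod' r a b ha hb with ⟨h1, e1⟩ | ⟨h1, e1⟩ <;>
    rcases aux_mod' r b a hb ha with ⟨h2, e2⟩ | ⟨h2, e2⟩ <;>
      rw [e1, e2] <;> split_ifs <;> first | (exfalso; omega) | simp

private def Lmap {F : Type*} [Field F] {m n t : ℕ} (p : Fin m → Matrix (Fin n) (Fin n) F)
    (j : Fin t → Fin m) (k : ℕ) (X : Fin t × Fin n → F) (a : Fin n) : F :=
  ∑ c : Fin t × Fin n, (p (j c.1) ^ k) a c.2 * X c

private lemma Lmap_zero {F : Type*} [Field F] {m n t : ℕ} (p : Fin m → Matrix (Fin n) (Fin n) F)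
    (j : Fin t → Fin m) (k : ℕ) (a : Fin n) : Lmap p j k 0 a = 0 := by
  simp [Lmap]

private lemma Lker {F : Type*} [Field F] {m n t r : ℕ}
    (p : Fin m → Matrix (Fin n) (Fin n) F) (j : Fin t → Fin m)
    (k : Fin t → Fin r)
    (hdet : IsUnit (Matrix.det (Matrix.of
      fun (u v : Fin t × Fin n) => (p (j v.1) ^ (k u.1 : ℕ)) u.2 v.2)))
    (X : Fin t × Fin n → F) (hX : ∀ (u : Fin t) (a : Fin n), Lmap p j (k u : ℕ) X a = 0) :
    X = 0 := by
  by_contra hX0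
  have h0 : (Matrix.of (fun (u v : Fin t × Fin n) =>
      (p (j v.1) ^ (k u.1 : ℕ)) u.2 v.2)).mulVec X = 0 := by
    funext c
    simpa [Matrix.mulVec, dotProduct, Lmap] using hX c.1 c.2
  exact (isUnit_iff_ne_zero.mp hdet) (Matrix.exists_mulVec_eq_zero_iff.mp ⟨X, hX0, h0⟩)

private lemma pick_sum {F : Type*} [AddCommMonoid F] {r t n : ℕ} (y0 : Fin r)
    (f : Fin t → Fin r → Fin n → F) :
    (∑ c : Fin t × (Fin r × Fin n), if c.2.1 = y0 then f c.1 c.2.1 c.2.2 else 0)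
      = ∑ c : Fin t × Fin n, f c.1 y0 c.2 := by
  calc (∑ c : Fin t × (Fin r × Fin n), if c.2.1 = y0 then f c.1 c.2.1 c.2.2 else 0)
      = ∑ v : Fin t, ∑ y : Fin r, ∑ b : Fin n, (if y = y0 then f v y b else 0) := by
        rw [Fintype.sum_prod_type]
        exact Finset.sum_congr rfl fun v _ => Fintype.sum_prod_type _
    _ = ∑ v : Fin t, ∑ b : Fin n, f v y0 b := by
        refine Finset.sum_congr rfl fun v _ => ?_
        rw [Finset.sum_comm]
        refine Finset.sum_congr rfl fun b _ => ?_
        simp [Finset.sum_ite_eq']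
    _ = ∑ c : Fin t × Fin n, f c.1 y0 c.2 :=
        (Fintype.sum_prod_type (f := fun c : Fin t × Fin n => f c.1 y0 c.2)).symm

private lemma ite_mul_pick {F : Type*} [Field F] {r : ℕ} {iu x y : Fin r} (hx : x = iu)
    (A B z C : F) (hA : y = iu → A * z = C) :
    (if y = iu then A else if y = x then B else 0) * z = (if y = iu then C else 0) := by
  by_cases h1 : y = iu
  · rw [if_pos h1, if_pos h1, hA h1]
  · have h2 : ¬ y = x := fun h => h1 (hx ▸ h)
    rw [if_neg h1, if_neg h2, if_neg h1, zero_mul]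

private lemma ite_mul_split {F : Type*} [Field F] {r : ℕ} {iu x y : Fin r} (hx : ¬ x = iu)
    (A B z C D : F) (hA : y = iu → A * z = C) (hB : y = x → B * z = D) :
    (if y = iu then A else if y = x then B else 0) * z
      = (if y = iu then C else 0) + (if y = x then D else 0) := by
  by_cases h1 : y = iu
  · have h2 : ¬ y = x := fun h => hx (h ▸ h1)
    rw [if_pos h1, if_pos h1, if_neg h2, hA h1, add_zero]
  · by_cases h2 : y = x
    · rw [if_neg h1, if_pos h2, if_neg h1, if_pos h2, hB h2, zero_add]
    · rw [if_neg h1, if_neg h2, if_neg h1, if_neg h2, add_zero, zero_mul]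

/-- The parity matrix `A^i` of Construction 2, built from the `n × n` matrix `p`
over a field, with blocks indexed by `Fin r × Fin r`. Writing `d = (x - i) mod r`,
the `(x, i)` block is `p ^ d`; for `x ≠ i` the `(x, x)` block is `β(x,i) • p ^ (r - d)`
where `β(x,i) = α` if (`2d < r`, or `2d = r` and `2i < r`) and `β(x,i) = 1` otherwise;
all other blocks are `0`. -/
def Ablock {F : Type*} [Field F] {r n : ℕ} (α : F)
    (p : Matrix (Fin n) (Fin n) F) (i : Fin r) :
    Matrix (Fin r × Fin n) (Fin r × Fin n) F :=
  Matrix.of fun xa yb =>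
    let d : ℕ := ((xa.1 : ℕ) + r - (i : ℕ)) % r
    if yb.1 = i then (p ^ d) xa.2 yb.2
    else if yb.1 = xa.1 then
      (if 2 * d < r ∨ (2 * d = r ∧ 2 * (i : ℕ) < r) then α else 1) *
        (p ^ (r - d)) xa.2 yb.2
    else 0

set_option maxHeartbeats 1600000 in
/-- If every `t × t` sub-block matrix of `[p_j ^ i]` is invertible
(i.e. Construction 1 built from the `p_j` is MDS), then every `t × t` sub-block
matrix built from the parity matrices `A_j^i` of Construction 2 is invertible
(i.e. Construction 2 is MDS). -/
theorem construction2_MDS_of_construction1_MDS (F : Type*) [Field F]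
    (α : F) (hα0 : α ≠ 0) (hα1 : α ≠ 1)
    (r m n : ℕ) (hr : 2 ≤ r) (hm : 1 ≤ m) (hn : 1 ≤ n)
    (p : Fin m → Matrix (Fin n) (Fin n) F)
    (hMDS : ∀ (t : ℕ), 1 ≤ t → t ≤ r →
      ∀ (i : Fin t → Fin r), Function.Injective i →
      ∀ (j : Fin t → Fin m), Function.Injective j →
        IsUnit (Matrix.det (Matrix.of
          fun (u v : Fin t × Fin n) => (p (j v.1) ^ (i u.1 : ℕ)) u.2 v.2))) :
    ∀ (t : ℕ), 1 ≤ t → t ≤ r →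
      ∀ (i : Fin t → Fin r), Function.Injective i →
      ∀ (j : Fin t → Fin m), Function.Injective j →
        IsUnit (Matrix.det (Matrix.of
          fun (u v : Fin t × (Fin r × Fin n)) =>
            Ablock α (p (j v.1)) (i u.1) u.2 v.2)) := by
  classical
  intro t ht1 htr i hi j hj
  rw [isUnit_iff_ne_zero]
  intro hdet
  obtain ⟨w, hw0, hw⟩ := Matrix.exists_mulVec_eq_zero_iff.mpr hdet
  have hr0 : 0 < r := by omega
  set Y : Fin r → Fin t × Fin n → F := fun y c => w (c.1, (y, c.2)) with hYdef
  have key : ∀ (u : Fin t) (x : Fin r) (a : Fin n),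
      Lmap p j (((x : ℕ) + r - (i u : ℕ)) % r) (Y (i u)) a
      + (if x = i u then 0 else
          (if 2 * (((x : ℕ) + r - (i u : ℕ)) % r) < r ∨
              (2 * (((x : ℕ) + r - (i u : ℕ)) % r) = r ∧ 2 * ((i u : ℕ)) < r) then α else 1)
          * Lmap p j (r - ((x : ℕ) + r - (i u : ℕ)) % r) (Y x) a) = 0 := by
    intro u x a
    have h := congrFun hw (u, (x, a))
    simp only [Matrix.mulVec, dotProduct, Matrix.of_apply, Pi.zero_apply, Ablock] at h
    by_cases hx : x = i u
    · rw [if_pos hx, add_zero]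
      have hpt : ∀ c : Fin t × (Fin r × Fin n),
          (if c.2.1 = i u then (p (j c.1) ^ (((x : ℕ) + r - (i u : ℕ)) % r)) a c.2.2
           else if c.2.1 = x then
             (if 2 * (((x : ℕ) + r - (i u : ℕ)) % r) < r ∨
                 (2 * (((x : ℕ) + r - (i u : ℕ)) % r) = r ∧ 2 * ((i u : ℕ)) < r) then α else 1) *
               (p (j c.1) ^ (r - ((x : ℕ) + r - (i u : ℕ)) % r)) a c.2.2
           else 0) * w c
          = (if c.2.1 = i u then
              (p (j c.1) ^ (((x : ℕ) + r - (i u : ℕ)) % r)) a c.2.2 * w (c.1, (i u, c.2.2))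
             else 0) := by
        intro c
        obtain ⟨v, y, b⟩ := c
        exact ite_mul_pick hx _ _ _ _ (fun h => by rw [show y = i u from h])
      rw [Finset.sum_congr rfl (fun c _ => hpt c), pick_sum (i u)
        (fun v _ b => (p (j v) ^ (((x : ℕ) + r - (i u : ℕ)) % r)) a b * w (v, (i u, b)))] at h
      simpa [Lmap, hYdef] using h
    · rw [if_neg hx]
      have hpt : ∀ c : Fin t × (Fin r × Fin n),
          (if c.2.1 = i u then (p (j c.1) ^ (((x : ℕ) + r - (i u : ℕ)) % r)) a c.2.2
           else if c.2.1 = x then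
             (if 2 * (((x : ℕ) + r - (i u : ℕ)) % r) < r ∨
                 (2 * (((x : ℕ) + r - (i u : ℕ)) % r) = r ∧ 2 * ((i u : ℕ)) < r) then α else 1) *
               (p (j c.1) ^ (r - ((x : ℕ) + r - (i u : ℕ)) % r)) a c.2.2
           else 0) * w c
          = (if c.2.1 = i u then
              (p (j c.1) ^ (((x : ℕ) + r - (i u : ℕ)) % r)) a c.2.2 * w (c.1, (i u, c.2.2))
             else 0)
            + (if c.2.1 = x then
                (if 2 * (((x : ℕ) + r - (i u : ℕ)) % r) < r ∨
                    (2 * (((x : ℕ) + r - (i u : ℕ)) % r) = r ∧ 2 * ((i u : ℕ)) < r) then α else 1) *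
                  ((p (j c.1) ^ (r - ((x : ℕ) + r - (i u : ℕ)) % r)) a c.2.2 * w (c.1, (x, c.2.2)))
               else 0) := by
        intro c
        obtain ⟨v, y, b⟩ := c
        exact ite_mul_split hx _ _ _ _ _ (fun h => by rw [show y = i u from h])
          (fun h => by rw [show y = x from h, mul_assoc])
      rw [Finset.sum_congr rfl (fun c _ => hpt c), Finset.sum_add_distrib,
        pick_sum (i u)
          (fun v _ b => (p (j v) ^ (((x : ℕ) + r - (i u : ℕ)) % r)) a b * w (v, (i u, b))),
        pick_sum x
          (fun v _ b =>
            (if 2 * (((x : ℕ) + r - (i u : ℕ)) % r) < r ∨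
                (2 * (((x : ℕ) + r - (i u : ℕ)) % r) = r ∧ 2 * ((i u : ℕ)) < r) then α else 1) *
              ((p (j v) ^ (r - ((x : ℕ) + r - (i u : ℕ)) % r)) a b * w (v, (x, b)))),
        ← Finset.mul_sum] at h
      simpa [Lmap, hYdef] using h
  have hz : ∀ (u w' : Fin t) (a : Fin n),
      Lmap p j (((i w' : ℕ) + r - (i u : ℕ)) % r) (Y (i u)) a = 0 := by
    intro u w' a
    by_cases huw : w' = u
    · subst huw
      have h := key w' (i w') a
      rw [if_pos rfl, add_zero] at h
      exact h
    · have hFne : i w' ≠ i u := fun h => huw (hi h)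
      have hvne : ((i w' : ℕ)) ≠ ((i u : ℕ)) := fun h => hFne (Fin.ext h)
      obtain ⟨hp1, hl1, hc⟩ := mod_facts r (i w') (i u) (i w').isLt (i u).isLt hvne
      have h1 := key u (i w') a
      have h2 := key w' (i u) a
      rw [if_neg hFne] at h1
      rw [if_neg (Ne.symm hFne)] at h2
      have er1 : r - ((i w' : ℕ) + r - (i u : ℕ)) % r = ((i u : ℕ) + r - (i w' : ℕ)) % r := by
        omega
      have hl2 : ((i u : ℕ) + r - (i w' : ℕ)) % r < r := Nat.mod_lt _ hr0
      have er2 : r - ((i u : ℕ) + r - (i w' : ℕ)) % r = ((i w' : ℕ) + r - (i u : ℕ)) % r := by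
        omega
      rw [er1] at h1
      rw [er2] at h2
      have hββ := beta_mul α r (i w') (i u) (i w').isLt (i u).isLt hvne
      set β1 := (if 2 * (((i w' : ℕ) + r - (i u : ℕ)) % r) < r ∨
          (2 * (((i w' : ℕ) + r - (i u : ℕ)) % r) = r ∧ 2 * ((i u : ℕ)) < r) then α else 1) with hb1
      set β2 := (if 2 * (((i u : ℕ) + r - (i w' : ℕ)) % r) < r ∨
          (2 * (((i u : ℕ) + r - (i w' : ℕ)) % r) = r ∧ 2 * ((i w' : ℕ)) < r) then α else 1) with hb2
      set z1 := Lmap p j (((i w' : ℕ) + r - (i u : ℕ)) % r) (Y (i u)) a with hz1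
      set z2 := Lmap p j (((i u : ℕ) + r - (i w' : ℕ)) % r) (Y (i w')) a with hz2
      have h3 : (1 - α) * z1 = 0 := by linear_combination h1 - β1 * h2 + z1 * hββ
      exact (mul_eq_zero.mp h3).resolve_left (sub_ne_zero_of_ne (Ne.symm hα1))
  have hYi : ∀ u, Y (i u) = 0 := by
    intro u
    have kinj : Function.Injective
        (fun w' : Fin t => (⟨((i w' : ℕ) + r - (i u : ℕ)) % r, Nat.mod_lt _ hr0⟩ : Fin r)) := by
      intro w1 w2 hww
      have hv : ((i w1 : ℕ) + r - (i u : ℕ)) % r = ((i w2 : ℕ) + r - (i u : ℕ)) % r :=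
        congrArg Fin.val hww
      have hb1 := (i w1).isLt
      have hb2 := (i w2).isLt
      have hb3 := (i u).isLt
      apply hi
      apply Fin.ext
      rcases aux_mod' r (i w1) (i u) (i w1).isLt (i u).isLt with ⟨h1, e1⟩ | ⟨h1, e1⟩ <;>
        rcases aux_mod' r (i w2) (i u) (i w2).isLt (i u).isLt with ⟨h2, e2⟩ | ⟨h2, e2⟩ <;>
          rw [e1, e2] at hv <;> omega
    exact Lker p j
        (fun w' : Fin t => (⟨((i w' : ℕ) + r - (i u : ℕ)) % r, Nat.mod_lt _ hr0⟩ : Fin r))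
        (hMDS t ht1 htr _ kinj j hj) (Y (i u)) (fun w' a => hz u w' a)
  have hYall : ∀ y : Fin r, Y y = 0 := by
    intro y
    by_cases hy : ∃ w', i w' = y
    · obtain ⟨w', rfl⟩ := hy
      exact hYi w'
    · push_neg at hy
      have hvne : ∀ u : Fin t, (y : ℕ) ≠ (i u : ℕ) := fun u h => hy u (Fin.ext h.symm)
      have hkb : ∀ u : Fin t, r - ((y : ℕ) + r - (i u : ℕ)) % r < r := by
        intro u
        obtain ⟨hp1, hl1, -⟩ := mod_facts r y (i u) y.isLt (i u).isLt (hvne u)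
        omega
      have kinj : Function.Injective
          (fun u : Fin t => (⟨r - ((y : ℕ) + r - (i u : ℕ)) % r, hkb u⟩ : Fin r)) := by
        intro u1 u2 huu
        have hv : r - ((y : ℕ) + r - (i u1 : ℕ)) % r = r - ((y : ℕ) + r - (i u2 : ℕ)) % r :=
          congrArg Fin.val huu
        obtain ⟨hp1, hl1, -⟩ := mod_facts r y (i u1) y.isLt (i u1).isLt (hvne u1)
        obtain ⟨hp2, hl2, -⟩ := mod_facts r y (i u2) y.isLt (i u2).isLt (hvne u2)
        have hv2 : ((y : ℕ) + r - (i u1 : ℕ)) % r = ((y : ℕ) + r - (i u2 : ℕ)) % r := by omega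
        have hb1 := (i u1).isLt
        have hb2 := (i u2).isLt
        have hb3 := y.isLt
        apply hi
        apply Fin.ext
        rcases aux_mod' r y (i u1) y.isLt (i u1).isLt with ⟨h1, e1⟩ | ⟨h1, e1⟩ <;>
          rcases aux_mod' r y (i u2) y.isLt (i u2).isLt with ⟨h2, e2⟩ | ⟨h2, e2⟩ <;>
            rw [e1, e2] at hv2 <;> omega
      have hL : ∀ (u : Fin t) (a : Fin n),
          Lmap p j (r - ((y : ℕ) + r - (i u : ℕ)) % r) (Y y) a = 0 := by
        intro u a
        have h := key u y a
        have hne : y ≠ i u := fun h' => hy u h'.symm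
        rw [if_neg hne, hYi u, Lmap_zero, zero_add] at h
        have hβne : (if 2 * (((y : ℕ) + r - (i u : ℕ)) % r) < r ∨
            (2 * (((y : ℕ) + r - (i u : ℕ)) % r) = r ∧ 2 * ((i u : ℕ)) < r)
            then α else 1) ≠ 0 := by
          split_ifs
          · exact hα0
          · exact one_ne_zero
        exact (mul_eq_zero.mp h).resolve_left hβne
      exact Lker p j
        (fun u : Fin t => (⟨r - ((y : ℕ) + r - (i u : ℕ)) % r, hkb u⟩ : Fin r))
        (hMDS t ht1 htr _ kinj j hj) (Y y) hL
  apply hw0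
  funext c
  obtain ⟨v, y, b⟩ := c
  have hc := congrFun (hYall y) (v, b)
  simpa [hYdef] using hc
end

section
/- Let F be a field, α ∈ F with α ≠ 0 and α ≠ 1, r ≥ 2, n ≥ 1, p an n × n matrix over F, and A^i (for i ∈ Fin r) the parity matrices of Construction 2 built from p. Let i, i' ∈ Fin r, set d = (i' − i) mod r, and suppose d ≥ 1 and (2d < r, or 2d = r and 2i < r). Then the row block i' of A^i and the row block i of A^{i'} agree as follows: for every block column y ∉ {i, i'}, both the (i', y) block of A^i and the (i, y) block of A^{i'} are the zero matrix; the (i', i) block of A^i and the (i, i) block of A^{i'} both equal p^{d}; the (i', i') block of A^i equals α·p^{r−d}; and the (i, i') block of A^{i'} equals p^{r−d}. (This is equation (2), stating that these two rows are identical except for the coefficient α.) -/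
/-- equation (2). For `d = (i' - i) mod r` with `d ≥ 1` and
(`2d < r`, or `2d = r` and `2i < r`), row block `i'` of `A^i` and row block `i`
of `A^{i'}` agree except for the coefficient `α`: both vanish outside block
columns `i, i'`; both have block `p ^ d` in column `i`; in column `i'`, `A^i`
has block `α • p ^ (r-d)` while `A^{i'}` has block `p ^ (r-d)`. -/
theorem construction2_row_comparison (F : Type*) [Field F]
    (α : F) (hα0 : α ≠ 0) (hα1 : α ≠ 1)
    (r n : ℕ) (hr : 2 ≤ r) (hn : 1 ≤ n)
    (p : Matrix (Fin n) (Fin n) F) (i i' : Fin r) :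
    let d : ℕ := ((i' : ℕ) + r - (i : ℕ)) % r
    1 ≤ d → (2 * d < r ∨ (2 * d = r ∧ 2 * (i : ℕ) < r)) →
      (∀ y : Fin r, y ≠ i → y ≠ i' → ∀ (a b : Fin n),
          Ablock α p i (i', a) (y, b) = 0 ∧ Ablock α p i' (i, a) (y, b) = 0) ∧
      (∀ a b : Fin n, Ablock α p i (i', a) (i, b) = (p ^ d) a b) ∧
      (∀ a b : Fin n, Ablock α p i' (i, a) (i, b) = (p ^ d) a b) ∧
      (∀ a b : Fin n, Ablock α p i (i', a) (i', b) = α * (p ^ (r - d)) a b) ∧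
      (∀ a b : Fin n, Ablock α p i' (i, a) (i', b) = (p ^ (r - d)) a b) := by
  intro d hd hcond
  have ha : (i' : ℕ) < r := i'.isLt
  have hb : (i : ℕ) < r := i.isLt
  have key : ∀ a b : ℕ, a < r → b < r →
      (a + r - b) % r = if b ≤ a then a - b else a + r - b := by
    intro a b ha hb
    split
    · rw [show a + r - b = a - b + r by omega, Nat.add_mod_right,
        Nat.mod_eq_of_lt (by omega)]
    · exact Nat.mod_eq_of_lt (by omega)
  have h1 := key (i' : ℕ) (i : ℕ) ha hb
  have h2 := key (i : ℕ) (i' : ℕ) hb ha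
  have hd' : 1 ≤ ((i' : ℕ) + r - (i : ℕ)) % r := hd
  have hc : 2 * (((i' : ℕ) + r - (i : ℕ)) % r) < r ∨
      (2 * (((i' : ℕ) + r - (i : ℕ)) % r) = r ∧ 2 * (i : ℕ) < r) := hcond
  rw [h1] at hd' hc
  have hne : (i' : ℕ) ≠ (i : ℕ) := by split_ifs at hd' <;> omega
  have hneF : i' ≠ i := fun h => hne (congrArg Fin.val h)
  have hneF' : i ≠ i' := fun h => hne (congrArg Fin.val h).symm
  have hsum : ((i' : ℕ) + r - (i : ℕ)) % r + ((i : ℕ) + r - (i' : ℕ)) % r = r := by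
    rw [h1, h2]; split_ifs at hd' ⊢ <;> omega
  have hdval : d = ((i' : ℕ) + r - (i : ℕ)) % r := rfl
  have hD' : ((i : ℕ) + r - (i' : ℕ)) % r = r - d := by omega
  have hnotcond : ¬(2 * (((i : ℕ) + r - (i' : ℕ)) % r) < r ∨
      (2 * (((i : ℕ) + r - (i' : ℕ)) % r) = r ∧ 2 * (i' : ℕ) < r)) := by
    rw [h2]; rw [h2] at hsum
    split_ifs at hc hsum ⊢ <;> omega
  refine ⟨?_, ?_, ?_, ?_, ?_⟩
  · intro y hyi hyi' a b
    constructor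
    · simp only [Ablock, Matrix.of_apply]
      rw [if_neg hyi, if_neg hyi']
    · simp only [Ablock, Matrix.of_apply]
      rw [if_neg hyi', if_neg hyi]
  · intro a b
    simp only [Ablock, Matrix.of_apply]
    rw [if_pos trivial]
  · intro a b
    simp only [Ablock, Matrix.of_apply]
    rw [if_neg hneF', if_pos trivial, if_neg hnotcond, one_mul,
      show r - ((i : ℕ) + r - (i' : ℕ)) % r = d by omega]
  · intro a b
    simp only [Ablock, Matrix.of_apply]
    rw [if_neg hneF, if_pos trivial, if_pos hcond]
  · intro a b
    simp only [Ablock, Matrix.of_apply]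
    rw [if_pos trivial, hD']
end

section
/- Let k ≥ 2 and work over the field F_3 = ZMod 3. For j ∈ {1, …, k}, define the matrix Q_j with rows and columns indexed by (ZMod 2)^k by: (Q_j)_{x,y} = 2 if x = y + e_j and y_1 + y_2 + ⋯ + y_j = 0 in ZMod 2; (Q_j)_{x,y} = 1 if x = y + e_j and y_1 + ⋯ + y_j ≠ 0; and (Q_j)_{x,y} = 0 otherwise. Then each Q_j is invertible, and for all j ≠ j' in {1, …, k}, the 2·2^k × 2·2^k block matrix [[I, I], [Q_j, Q_{j'}]] is invertible (equivalently, Q_{j'} − Q_j is invertible). That is, with r = 2 parities, this coefficient assignment over the field of size 3 makes Construction 1 an MDS code. -/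
namespace Construction1Aux

variable {k : ℕ}

lemma addSelf (a : Fin k → ZMod 2) : a + a = 0 := by
  funext t; exact CharTwo.add_self_eq_zero _

/-- partial sum of coordinates up to `j` -/
def S (j : Fin k) (y : Fin k → ZMod 2) : ZMod 2 :=
  ∑ t ∈ Finset.univ.filter (fun t => t ≤ j), y t

/-- coefficient -/
def c (j : Fin k) (y : Fin k → ZMod 2) : ZMod 3 := if S j y = 0 then 2 else 1

/-- shift-with-coefficient matrix -/
def shiftMat (v : Fin k → ZMod 2) (f : (Fin k → ZMod 2) → ZMod 3) :
    Matrix (Fin k → ZMod 2) (Fin k → ZMod 2) (ZMod 3) :=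
  Matrix.of fun x y => if x = y + v then f y else 0

lemma shift_mul (v w : Fin k → ZMod 2) (f g : (Fin k → ZMod 2) → ZMod 3) :
    shiftMat v f * shiftMat w g = shiftMat (v + w) (fun z => f (z + w) * g z) := by
  ext x z
  simp only [shiftMat, Matrix.mul_apply, Matrix.of_apply]
  rw [Finset.sum_eq_single (z + w)]
  · have h : z + w + v = z + (v + w) := by abel
    by_cases hx : x = z + (v + w) <;> simp [hx, h]
  · intro y _ hy
    rw [if_neg hy, mul_zero]
  · simp

lemma S_add_single (j j' : Fin k) (y : Fin k → ZMod 2) :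
    S j (y + Pi.single j' 1) = S j y + (if j' ≤ j then 1 else 0) := by
  simp only [S, Pi.add_apply, Finset.sum_add_distrib]
  rw [Finset.sum_pi_single']
  simp [Finset.mem_filter]

lemma zmod2_cases (x : ZMod 2) : x = 0 ∨ x = 1 := by
  revert x; decide

lemma c_pair (j : Fin k) (y z : Fin k → ZMod 2) (h : S j y = S j z + 1) :
    c j y * c j z = 2 := by
  unfold c
  rcases zmod2_cases (S j z) with h0 | h0 <;> rw [h, h0] <;> decide

lemma c_sq (j : Fin k) (y z : Fin k → ZMod 2) (h : S j y = S j z) :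
    c j y * c j z = 1 := by
  unfold c
  rcases zmod2_cases (S j z) with h0 | h0 <;> rw [h, h0] <;> decide

/-- the matrix of the statement -/
def Qm (j : Fin k) : Matrix (Fin k → ZMod 2) (Fin k → ZMod 2) (ZMod 3) :=
  shiftMat (Pi.single j 1) (c j)

lemma Qm_sq (j : Fin k) : Qm j * Qm j = (2 : ZMod 3) • 1 := by
  rw [Qm, shift_mul, addSelf]
  ext x z
  simp only [shiftMat, Matrix.of_apply, add_zero, Matrix.smul_apply, Matrix.one_apply, smul_ite,
    smul_zero]
  have hc : c j (z + Pi.single j 1) * c j z = 2 := by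
    apply c_pair
    rw [S_add_single, if_pos le_rfl]
  rw [hc]
  by_cases hx : x = z <;> simp [hx]

lemma key (j j' : Fin k) (h : j ≠ j') (z : Fin k → ZMod 2) :
    c j (z + Pi.single j 1) * c j' (z + Pi.single j 1 + Pi.single j' 1) *
      (c j (z + Pi.single j' 1) * c j' z) = 2 := by
  have h1 : S j (z + Pi.single j 1) = S j z + 1 := by
    rw [S_add_single, if_pos le_rfl]
  have h2 : S j' (z + Pi.single j 1 + Pi.single j' 1)
      = S j' z + (if j ≤ j' then 1 else 0) + 1 := by
    rw [S_add_single, S_add_single, if_pos le_rfl]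
  have h3 : S j (z + Pi.single j' 1) = S j z + (if j' ≤ j then 1 else 0) :=
    S_add_single j j' z
  rcases le_or_gt j j' with hle | hlt
  · have hne : ¬ j' ≤ j := fun hh => h (le_antisymm hle hh)
    rw [if_pos hle] at h2; rw [if_neg hne, add_zero] at h3
    have p1 : c j (z + Pi.single j 1) * c j (z + Pi.single j' 1) = 2 :=
      c_pair _ _ _ (by rw [h1, h3])
    have p2 : c j' (z + Pi.single j 1 + Pi.single j' 1) * c j' z = 1 :=
      c_sq _ _ _ (by rw [h2, add_assoc, show (1 : ZMod 2) + 1 = 0 by decide, add_zero])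
    rw [mul_mul_mul_comm, p1, p2, mul_one]
  · have hle' : j' ≤ j := hlt.le
    have hne : ¬ j ≤ j' := not_le_of_gt hlt
    rw [if_neg hne, add_zero] at h2; rw [if_pos hle'] at h3
    have p1 : c j (z + Pi.single j 1) * c j (z + Pi.single j' 1) = 1 :=
      c_sq _ _ _ (by rw [h1, h3])
    have p2 : c j' (z + Pi.single j 1 + Pi.single j' 1) * c j' z = 2 :=
      c_pair _ _ _ h2
    rw [mul_mul_mul_comm, p1, p2, one_mul]

lemma QmQm_sq (j j' : Fin k) (hjj : j ≠ j') :
    (Qm j * Qm j') * (Qm j * Qm j') = (2 : ZMod 3) • 1 := by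
  rw [Qm, Qm, shift_mul, shift_mul, addSelf]
  ext x z
  simp only [shiftMat, Matrix.of_apply, add_zero, Matrix.smul_apply, Matrix.one_apply, smul_ite,
    smul_zero]
  have e1 : z + (Pi.single j 1 + Pi.single j' 1) + Pi.single j' 1 = z + Pi.single j 1 := by
    rw [add_assoc z, add_assoc (Pi.single j 1), addSelf, add_zero]
  have e2 : z + (Pi.single j 1 + Pi.single j' 1) = z + Pi.single j 1 + Pi.single j' 1 :=
    (add_assoc _ _ _).symm
  rw [e1, e2, key j j' hjj z]
  by_cases hx : x = z <;> simp [hx]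

lemma Qm_det_isUnit (j : Fin k) : IsUnit (Qm j).det := by
  have h : Qm j * ((2 : ZMod 3) • Qm j) = 1 := by
    rw [mul_smul_comm, Qm_sq, smul_smul, show (2 : ZMod 3) * 2 = 1 by decide, one_smul]
  exact IsUnit.of_mul_eq_one _ (by rw [← Matrix.det_mul, h, Matrix.det_one])

lemma sub_det_isUnit (j j' : Fin k) (hjj : j ≠ j') :
    IsUnit (Qm j' - Qm j).det := by
  set A := Qm j
  set B := Qm j'
  have hA : A * A = (2 : ZMod 3) • 1 := Qm_sq j
  have hBA : (B * A) * (B * A) = (2 : ZMod 3) • 1 := QmQm_sq j' j (Ne.symm hjj)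
  have h : (B - A) * (A * B * A + (2 : ZMod 3) • A) = 1 := by
    rw [sub_mul, mul_add, mul_add]
    have t1 : B * (A * B * A) = (2 : ZMod 3) • 1 := by
      calc B * (A * B * A) = (B * A) * (B * A) := by simp only [mul_assoc]
      _ = (2 : ZMod 3) • 1 := hBA
    have t2 : B * ((2 : ZMod 3) • A) = (2 : ZMod 3) • (B * A) := mul_smul_comm _ _ _
    have t3 : A * (A * B * A) = (2 : ZMod 3) • (B * A) := by
      calc A * (A * B * A) = (A * A) * (B * A) := by simp only [mul_assoc]
      _ = ((2 : ZMod 3) • 1) * (B * A) := by rw [hA]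
      _ = (2 : ZMod 3) • (B * A) := by rw [Matrix.smul_mul, one_mul]
    have t4 : A * ((2 : ZMod 3) • A) = 1 := by
      rw [mul_smul_comm, hA, smul_smul, show (2 : ZMod 3) * 2 = 1 by decide, one_smul]
    rw [t1, t2, t3, t4, sub_add_eq_sub_sub, add_sub_cancel_right, two_smul,
      add_sub_cancel_right]
  exact IsUnit.of_mul_eq_one _ (by rw [← Matrix.det_mul, h, Matrix.det_one])

end Construction1Aux


/-- Over `F_3 = ZMod 3`, with `Q j` the coefficient-modified
permutation matrix of `x ↦ x + e j` on `(ZMod 2)^k` (entry `2` when the partial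
sum `y 1 + ⋯ + y j` vanishes, entry `1` otherwise), each `Q j` is invertible and
for `j ≠ j'` the block matrix `[[I, I], [Q j, Q j']]` is invertible: with `r = 2`
parities, this assignment over the field of size 3 makes Construction 1 MDS. -/
theorem construction1_MDS_r2_F3 (k : ℕ) (hk : 2 ≤ k) :
    let Q : Fin k → Matrix (Fin k → ZMod 2) (Fin k → ZMod 2) (ZMod 3) := fun j =>
      Matrix.of fun x y =>
        if x = y + Pi.single j 1 then
          (if (∑ t ∈ Finset.univ.filter (fun t => t ≤ j), y t) = 0 then 2 else 1)
        else 0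
    (∀ j : Fin k, IsUnit (Q j).det) ∧
    (∀ j j' : Fin k, j ≠ j' →
      IsUnit (Matrix.fromBlocks
        (1 : Matrix (Fin k → ZMod 2) (Fin k → ZMod 2) (ZMod 3)) 1 (Q j) (Q j')).det) := by
  intro Q
  have hQ : ∀ j, Q j = Construction1Aux.Qm j := fun j => rfl
  constructor
  · intro j
    rw [hQ]
    exact Construction1Aux.Qm_det_isUnit j
  · intro j j' hjj
    rw [Matrix.det_fromBlocks_one₁₁, hQ, hQ, Matrix.mul_one]
    exact Construction1Aux.sub_det_isUnit j j' hjj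
end
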